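/- Let α = (α_1,…,α_n), β = (β_1,…,β_n) be tuples of real numbers, B = e^{2πiβ_{i₀}} for some i₀, m_B = #{i : e^{2πiβ_i} = B}, and 0 ≤ r < m_B. Then for every w with Re w > 0, g_{B,r}(w + 2πi) = B · Σ_{p=0}^r binom(r,p) · g_{B,p}(w). Consequently, in the basis S_{B_j,r}, the local monodromy of the hypergeometric equation around ∞ (the loop around ∞ being the inverse of the loop around 0) is the inverse transposed block-diagonal matrix (D_{B,m_B}^t)^{−1}. -/

import Mathlib

open Complex Filter Set Finset
open scoped Real

noncomputable section

/-- The balanced gamma product `𝚪_{α,β}(s)`. -/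
def gammaProd {n : ℕ} (α β : Fin n → ℂ) (s : ℂ) : ℂ :=
  (∏ i, (Complex.Gamma (s - α i + 1))⁻¹) * ∏ i, (Complex.Gamma (-s + β i + 1))⁻¹

/-- The local solution `g_{B,r}(w) = Σ_{l≥0} (2πi)^{-r}(d/dt)^r[𝚪_{α,β}(-l+t)e^{(-l+t)w}]|_{t=ν'}`
of the hypergeometric equation at `∞`, in the exponential coordinate `z = e^w`. -/
def gB {n : ℕ} (α β : Fin n → ℝ) (ν' : ℝ) (r : ℕ) (w : ℂ) : ℂ :=
  ∑' l : ℕ, ((2 * (π : ℂ) * Complex.I) ^ r)⁻¹ *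
    iteratedDeriv r
      (fun t : ℂ =>
        gammaProd (fun i => (α i : ℂ)) (fun i => (β i : ℂ)) (-(l : ℂ) + t) *
          Complex.exp ((-(l : ℂ) + t) * w)) (ν' : ℂ)

open scoped NNReal

lemma inv_Gamma_rec (z : ℂ) : (Complex.Gamma z)⁻¹ = z * (Complex.Gamma (z+1))⁻¹ := by
  rcases eq_or_ne z 0 with rfl | hz
  · simp [Complex.Gamma_zero]
  · rw [Complex.Gamma_add_one z hz, mul_inv, ← mul_assoc, mul_inv_cancel₀ hz, one_mul]

lemma gammaProd_differentiable {n : ℕ} (α β : Fin n → ℂ) :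
    Differentiable ℂ (gammaProd α β) := by
  apply Differentiable.mul
  · exact Differentiable.fun_finsetProd fun i _ =>
      Complex.differentiable_one_div_Gamma.comp (by fun_prop)
  · exact Differentiable.fun_finsetProd fun i _ =>
      Complex.differentiable_one_div_Gamma.comp (by fun_prop)

lemma gammaProd_rec {n : ℕ} (α β : Fin n → ℂ) (s : ℂ) :
    gammaProd α β (s - 1) * ∏ i, (-s + β i + 1) = (∏ i, (s - α i)) * gammaProd α β s := by
  unfold gammaProd
  have e1 : ∀ i : Fin n, (Complex.Gamma ((s-1) - α i + 1))⁻¹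
      = (s - α i) * (Complex.Gamma (s - α i + 1))⁻¹ := by
    intro i
    have h := inv_Gamma_rec (s - α i)
    rw [show (s-1) - α i + 1 = s - α i by ring]
    rw [show s - α i + 1 = (s - α i) + 1 by ring]
    exact h
  have e2 : ∀ i : Fin n, (Complex.Gamma (-(s-1) + β i + 1))⁻¹ * (-s + β i + 1)
      = (Complex.Gamma (-s + β i + 1))⁻¹ := by
    intro i
    have h := inv_Gamma_rec (-s + β i + 1)
    rw [show -(s-1) + β i + 1 = (-s + β i + 1) + 1 by ring, h]
    ring
  calc (∏ i, (Complex.Gamma ((s-1) - α i + 1))⁻¹) *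
        (∏ i, (Complex.Gamma (-(s-1) + β i + 1))⁻¹) * (∏ i, (-s + β i + 1))
      = (∏ i, ((s - α i) * (Complex.Gamma (s - α i + 1))⁻¹)) *
          (∏ i, ((Complex.Gamma (-(s-1) + β i + 1))⁻¹ * (-s + β i + 1))) := by
        rw [Finset.prod_congr rfl (fun i _ => e1 i), mul_assoc, ← Finset.prod_mul_distrib]
    _ = ((∏ i, (s - α i)) * ∏ i, (Complex.Gamma (s - α i + 1))⁻¹) *
          ∏ i, (Complex.Gamma (-s + β i + 1))⁻¹ := by
        rw [Finset.prod_mul_distrib, Finset.prod_congr rfl (fun i _ => e2 i)]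
    _ = _ := by ring

lemma pascal_sum (m : ℕ) (a b : ℕ → ℂ) :
    ∑ p ∈ Finset.range (m + 2), ((m+1).choose p : ℂ) * a p * b (m + 1 - p)
      = ∑ p ∈ Finset.range (m + 1),
          (m.choose p : ℂ) * (a (p+1) * b (m - p) + a p * b (m + 1 - p)) := by
  have hg : ∀ j, (m.choose j : ℂ) * a j * b (m + 1 - j)
      = (m.choose j : ℂ) * (a j * b (m + 1 - j)) := fun j => by ring
  rw [Finset.sum_range_succ' (fun p => ((m+1).choose p : ℂ) * a p * b (m + 1 - p)) (m+1)]
  have h1 : ∀ i ∈ Finset.range (m+1),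
      (((m+1).choose (i+1) : ℂ)) * a (i+1) * b (m+1-(i+1))
        = (m.choose i : ℂ) * (a (i+1) * b (m-i))
          + (m.choose (i+1) : ℂ) * a (i+1) * b (m+1-(i+1)) := by
    intro i hi
    rw [Nat.choose_succ_succ, Nat.cast_add, Nat.succ_sub_succ]
    ring
  rw [Finset.sum_congr rfl h1, Finset.sum_add_distrib]
  have h2 : (∑ i ∈ Finset.range (m+1), (m.choose (i+1) : ℂ) * a (i+1) * b (m+1-(i+1)))
      + ((m+1).choose 0 : ℂ) * a 0 * b (m+1-0)
      = ∑ j ∈ Finset.range (m+1), (m.choose j : ℂ) * a j * b (m+1-j) := by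
    have e1 := Finset.sum_range_succ' (fun j => (m.choose j : ℂ) * a j * b (m+1-j)) (m+1)
    have e2 := Finset.sum_range_succ (fun j => (m.choose j : ℂ) * a j * b (m+1-j)) (m+1)
    simp only [Nat.choose_succ_self, Nat.cast_zero, zero_mul, add_zero,
      Nat.choose_zero_right, Nat.cast_one] at e1 e2
    simp only [Nat.choose_zero_right, Nat.cast_one]
    rw [← e1, e2]
  rw [add_assoc, h2]
  rw [show (∑ p ∈ Finset.range (m + 1),
      (m.choose p : ℂ) * (a (p+1) * b (m - p) + a p * b (m + 1 - p)))
    = (∑ p ∈ Finset.range (m+1), (m.choose p : ℂ) * (a (p+1) * b (m-p)))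
      + ∑ p ∈ Finset.range (m+1), (m.choose p : ℂ) * a p * b (m+1-p) from by
    rw [← Finset.sum_add_distrib]; exact Finset.sum_congr rfl fun p _ => by ring]

lemma iteratedDeriv_mul_entire {f g : ℂ → ℂ} (hf : Differentiable ℂ f)
    (hg : Differentiable ℂ g) :
    ∀ (m : ℕ) (x : ℂ), iteratedDeriv m (fun t => f t * g t) x =
      ∑ p ∈ Finset.range (m + 1),
        (m.choose p : ℂ) * iteratedDeriv p f x * iteratedDeriv (m - p) g x := by
  have hfd : ∀ p, Differentiable ℂ (iteratedDeriv p f) := fun p =>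
    (hf.contDiff (n := ⊤)).differentiable_iteratedDeriv p (by simp)
  have hgd : ∀ p, Differentiable ℂ (iteratedDeriv p g) := fun p =>
    (hg.contDiff (n := ⊤)).differentiable_iteratedDeriv p (by simp)
  intro m
  induction m with
  | zero => intro x; simp
  | succ m ih =>
    intro x
    rw [iteratedDeriv_succ]
    have hfun : iteratedDeriv m (fun t => f t * g t) = fun y =>
        ∑ p ∈ Finset.range (m+1),
          (m.choose p : ℂ) * iteratedDeriv p f y * iteratedDeriv (m-p) g y :=
      funext ih
    rw [hfun, deriv_fun_sum (A := fun p y => (m.choose p : ℂ) * iteratedDeriv p f y * iteratedDeriv (m-p) g y) (fun p _ =>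
      (((hfd p).const_mul ((m.choose p : ℂ))).mul (hgd (m-p))).differentiableAt)]
    have hterm : ∀ p ∈ Finset.range (m+1),
        deriv (fun y => (m.choose p : ℂ) * iteratedDeriv p f y * iteratedDeriv (m-p) g y) x
        = (m.choose p : ℂ) * (iteratedDeriv (p+1) f x * iteratedDeriv (m-p) g x
            + iteratedDeriv p f x * iteratedDeriv (m+1-p) g x) := by
      intro p hp
      have hple : p ≤ m := Nat.lt_succ_iff.mp (Finset.mem_range.mp hp)
      have e1 : (fun y => (m.choose p : ℂ) * iteratedDeriv p f y * iteratedDeriv (m-p) g y)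
          = fun y => (m.choose p : ℂ) * (iteratedDeriv p f y * iteratedDeriv (m-p) g y) := by
        funext y; ring
      rw [e1, deriv_const_mul (d := fun y => iteratedDeriv p f y * iteratedDeriv (m-p) g y) _ (((hfd p).mul (hgd (m-p))).differentiableAt),
        deriv_fun_mul ((hfd p).differentiableAt) ((hgd (m-p)).differentiableAt),
        ← iteratedDeriv_succ, ← iteratedDeriv_succ]
      rw [show m - p + 1 = m + 1 - p by omega]
    rw [Finset.sum_congr rfl hterm, ← pascal_sum m
      (fun p => iteratedDeriv p f x) (fun q => iteratedDeriv q g x)]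

lemma cauchy_bound {f : ℂ → ℂ} (hf : Differentiable ℂ f) (c : ℂ) (p : ℕ) (M : ℝ)
    (hM : ∀ t ∈ Metric.sphere c (1:ℝ), ‖f t‖ ≤ M) :
    ‖iteratedDeriv p f c‖ ≤ (p.factorial : ℝ) * M := by
  have hps : HasFPowerSeriesOnBall f (cauchyPowerSeries f c ((1:ℝ≥0):ℝ)) c ⊤ :=
    hf.hasFPowerSeriesOnBall c (R := 1) one_pos
  have h1 := hps.factorial_smul (1:ℂ) p
  rw [iteratedDeriv_eq_iteratedFDeriv, ← h1]
  have h2 : ‖p.factorial • (cauchyPowerSeries f c ((1:ℝ≥0):ℝ) p fun _ => (1:ℂ))‖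
      = (p.factorial : ℝ) * ‖cauchyPowerSeries f c ((1:ℝ≥0):ℝ) p fun _ => (1:ℂ)‖ := by
    rw [nsmul_eq_mul, norm_mul]; norm_num
  rw [h2]
  have hMnn : 0 ≤ M :=
    le_trans (norm_nonneg _) (hM (c+1) (by simp [Metric.mem_sphere, dist_eq_norm]))
  refine mul_le_mul_of_nonneg_left ?_ (by positivity)
  have h3 : ‖cauchyPowerSeries f c ((1:ℝ≥0):ℝ) p fun _ => (1:ℂ)‖
      ≤ ‖cauchyPowerSeries f c ((1:ℝ≥0):ℝ) p‖ := by
    have := (cauchyPowerSeries f c ((1:ℝ≥0):ℝ) p).le_opNorm (fun _ => (1:ℂ))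
    simpa using this
  refine h3.trans ?_
  have h4 := norm_cauchyPowerSeries_le f c ((1:ℝ≥0):ℝ) p
  have h5 : (∫ θ : ℝ in (0:ℝ)..2 * π, ‖f (circleMap c ((1:ℝ≥0):ℝ) θ)‖) ≤ 2 * π * M := by
    have : ∀ θ ∈ Set.Icc (0:ℝ) (2*π), ‖f (circleMap c ((1:ℝ≥0):ℝ) θ)‖ ≤ M := by
      intro θ _
      exact hM _ (circleMap_mem_sphere c (by norm_num) θ)
    calc (∫ θ : ℝ in (0:ℝ)..2 * π, ‖f (circleMap c ((1:ℝ≥0):ℝ) θ)‖)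
        ≤ ∫ _ : ℝ in (0:ℝ)..2 * π, M := by
          apply intervalIntegral.integral_mono_on Real.two_pi_pos.le
          · exact ((hf.continuous.comp (continuous_circleMap _ _)).norm).intervalIntegrable _ _
          · exact intervalIntegrable_const
          · exact this
      _ = 2 * π * M := by simp [mul_comm]
  have habs : |((1:ℝ≥0):ℝ)|⁻¹ ^ p = 1 := by norm_num
  calc ‖cauchyPowerSeries f c ((1:ℝ≥0):ℝ) p‖
      ≤ ((2 * π)⁻¹ * ∫ θ : ℝ in (0:ℝ)..2 * π, ‖f (circleMap c ((1:ℝ≥0):ℝ) θ)‖)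
        * |((1:ℝ≥0):ℝ)|⁻¹ ^ p := h4
    _ = (2 * π)⁻¹ * ∫ θ : ℝ in (0:ℝ)..2 * π, ‖f (circleMap c ((1:ℝ≥0):ℝ) θ)‖ := by
        rw [habs, mul_one]
    _ ≤ (2 * π)⁻¹ * (2 * π * M) := mul_le_mul_of_nonneg_left h5 (by positivity)
    _ = M := by field_simp

lemma summable_term {n : ℕ} (α β : Fin n → ℝ) (ν : ℝ) (p : ℕ) (w : ℂ) (hw : 0 < w.re) :
    Summable (fun l : ℕ => iteratedDeriv p
      (fun t : ℂ => gammaProd (fun i => (α i:ℂ)) (fun i => (β i:ℂ)) (-(l:ℂ) + t) *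
        Complex.exp ((-(l:ℂ) + t) * w)) (ν:ℂ)) := by
  set G : ℂ → ℂ := gammaProd (fun i => (α i:ℂ)) (fun i => (β i:ℂ)) with hGdef
  have hGdiff : Differentiable ℂ G := gammaProd_differentiable _ _
  set S : Set ℂ := Metric.sphere ((ν:ℂ)) 1 with hSdef
  have hSne : S.Nonempty := ⟨(ν:ℂ) + 1, by simp [hSdef, Metric.mem_sphere, dist_eq_norm]⟩
  have hbdd : ∀ l : ℕ, BddAbove ((fun t => ‖G (-(l:ℂ) + t)‖) '' S) := fun l =>
    (isCompact_sphere _ _).bddAbove_image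
      ((hGdiff.comp ((differentiable_const _).add differentiable_id)).continuous).norm.continuousOn
  set d : ℕ → ℝ := fun l => sSup ((fun t => ‖G (-(l:ℂ) + t)‖) '' S) with hddef
  have hdub : ∀ l : ℕ, ∀ t ∈ S, ‖G (-(l:ℂ)+t)‖ ≤ d l := fun l t ht =>
    le_csSup (hbdd l) (Set.mem_image_of_mem _ ht)
  have hd0 : ∀ l : ℕ, 0 ≤ d l := fun l =>
    le_trans (norm_nonneg _) (hdub l _ hSne.choose_spec)
  have htb : ∀ t ∈ S, ‖t‖ ≤ |ν| + 1 := by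
    intro t ht
    have h1 : ‖t - (ν:ℂ)‖ = 1 := by
      simpa [hSdef, Metric.mem_sphere, dist_eq_norm] using ht
    calc ‖t‖ = ‖(t - (ν:ℂ)) + (ν:ℂ)‖ := by ring_nf
      _ ≤ ‖t - (ν:ℂ)‖ + ‖(ν:ℂ)‖ := norm_add_le _ _
      _ = 1 + |ν| := by rw [h1]; simp [Complex.norm_real]
      _ = |ν| + 1 := by ring
  set A : ℝ := 2 + |ν| + ∑ i, (|α i| + |β i|) with hAdef
  have hαA : ∀ i, |α i| ≤ A - 2 - |ν| := by
    intro i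
    have h1 : |α i| + |β i| ≤ ∑ i, (|α i| + |β i|) :=
      Finset.single_le_sum (f := fun i => |α i| + |β i|) (fun i _ => by positivity)
        (Finset.mem_univ i)
    have : A - 2 - |ν| = ∑ i, (|α i| + |β i|) := by rw [hAdef]; ring
    rw [this]
    have := abs_nonneg (β i); linarith
  have hβA : ∀ i, |β i| ≤ A - 2 - |ν| := by
    intro i
    have h1 : |α i| + |β i| ≤ ∑ i, (|α i| + |β i|) :=
      Finset.single_le_sum (f := fun i => |α i| + |β i|) (fun i _ => by positivity)
        (Finset.mem_univ i)
    have : A - 2 - |ν| = ∑ i, (|α i| + |β i|) := by rw [hAdef]; ring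
    rw [this]
    have := abs_nonneg (α i); linarith
  have hA2 : 2 + |ν| ≤ A := by
    have : (0:ℝ) ≤ ∑ i, (|α i| + |β i|) := Finset.sum_nonneg fun i _ => by positivity
    rw [hAdef]; linarith
  have hνnn : (0:ℝ) ≤ |ν| := abs_nonneg ν
  have hkey : ∀ l : ℕ, A + 1 ≤ (l:ℝ) → ∀ t ∈ S,
      ‖G (-((l+1:ℕ):ℂ) + t)‖ ≤ (((l:ℝ) + A) / ((l:ℝ) + (2 - A)))^n * ‖G (-(l:ℂ)+t)‖ := by
    intro l hl t ht
    set s : ℂ := -(l:ℂ) + t with hsdef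
    have hrec := gammaProd_rec (fun i => (α i:ℂ)) (fun i => (β i:ℂ)) s
    have hcast : -((l+1:ℕ):ℂ) + t = s - 1 := by rw [hsdef]; push_cast; ring
    rw [hcast]
    have hnorm : ‖G (s-1)‖ * ∏ i, ‖-s + ((β i:ℝ):ℂ) + 1‖
        = (∏ i, ‖s - ((α i:ℝ):ℂ)‖) * ‖G s‖ := by
      have h := congrArg (fun z => ‖z‖) hrec
      simpa [norm_mul, norm_prod] using h
    have hub : ∀ i, ‖s - ((α i:ℝ):ℂ)‖ ≤ (l:ℝ) + A := by
      intro i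
      have h1 : s - ((α i:ℝ):ℂ) = t + (-((((l:ℝ) + α i : ℝ)):ℂ)) := by
        rw [hsdef]; push_cast; ring
      rw [h1]
      have h2 : ‖(-((((l:ℝ) + α i : ℝ)):ℂ))‖ = |(l:ℝ) + α i| := by
        rw [norm_neg, Complex.norm_real, Real.norm_eq_abs]
      calc ‖t + (-((((l:ℝ) + α i : ℝ)):ℂ))‖
          ≤ ‖t‖ + ‖(-((((l:ℝ) + α i : ℝ)):ℂ))‖ := norm_add_le _ _
        _ ≤ (|ν| + 1) + ((l:ℝ) + |α i|) := by
            have h3 := htb t ht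
            have h4 : |(l:ℝ) + α i| ≤ (l:ℝ) + |α i| := by
              calc |(l:ℝ) + α i| ≤ |(l:ℝ)| + |α i| := abs_add_le _ _
                _ = (l:ℝ) + |α i| := by rw [Nat.abs_cast]
            rw [h2]; linarith
        _ ≤ (l:ℝ) + A := by have := hαA i; linarith
    have hlb : ∀ i, (l:ℝ) + (2 - A) ≤ ‖-s + ((β i:ℝ):ℂ) + 1‖ := by
      intro i
      have hre : (-s + ((β i:ℝ):ℂ) + 1).re = (l:ℝ) + β i + 1 - t.re := by
        rw [hsdef]; simp; ring
      have htre : t.re ≤ |ν| + 1 := le_trans (Complex.re_le_norm t) (htb t ht)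
      calc (l:ℝ) + (2 - A) ≤ (-s + ((β i:ℝ):ℂ) + 1).re := by
            rw [hre]
            have h5 := hβA i
            have h6 := neg_abs_le (β i)
            linarith
        _ ≤ ‖-s + ((β i:ℝ):ℂ) + 1‖ := Complex.re_le_norm _
        _ = ‖-s + ((β i:ℝ):ℂ) + 1‖ := rfl
    have hdpos : 0 < (l:ℝ) + (2 - A) := by linarith
    have hprod_lb : ((l:ℝ) + (2 - A))^n ≤ ∏ i, ‖-s + ((β i:ℝ):ℂ) + 1‖ := by
      have : ((l:ℝ) + (2 - A))^n = ∏ _i : Fin n, ((l:ℝ) + (2 - A)) := by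
        rw [Finset.prod_const, Finset.card_univ, Fintype.card_fin]
      rw [this]
      exact Finset.prod_le_prod (fun i _ => hdpos.le) (fun i _ => hlb i)
    have hprod_ub : ∏ i, ‖s - ((α i:ℝ):ℂ)‖ ≤ ((l:ℝ) + A)^n := by
      have h7 : ((l:ℝ) + A)^n = ∏ _i : Fin n, ((l:ℝ) + A) := by
        rw [Finset.prod_const, Finset.card_univ, Fintype.card_fin]
      rw [h7]
      exact Finset.prod_le_prod (fun i _ => norm_nonneg _) (fun i _ => hub i)
    have h2 : ‖G (s-1)‖ * ((l:ℝ)+(2-A))^n ≤ ((l:ℝ)+A)^n * ‖G s‖ := by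
      calc ‖G (s-1)‖ * ((l:ℝ)+(2-A))^n
          ≤ ‖G (s-1)‖ * ∏ i, ‖-s + ((β i:ℝ):ℂ) + 1‖ :=
            mul_le_mul_of_nonneg_left hprod_lb (norm_nonneg _)
        _ = (∏ i, ‖s - ((α i:ℝ):ℂ)‖) * ‖G s‖ := hnorm
        _ ≤ ((l:ℝ)+A)^n * ‖G s‖ :=
            mul_le_mul_of_nonneg_right hprod_ub (norm_nonneg _)
    rw [div_pow, div_mul_eq_mul_div, le_div_iff₀ (pow_pos hdpos n)]
    exact h2
  have hdrec : ∀ l : ℕ, A + 1 ≤ (l:ℝ) →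
      d (l+1) ≤ (((l:ℝ)+A)/((l:ℝ)+(2-A)))^n * d l := by
    intro l hl
    have hdpos : 0 < (l:ℝ) + (2 - A) := by linarith
    have hKnn : 0 ≤ (((l:ℝ)+A)/((l:ℝ)+(2-A)))^n :=
      pow_nonneg (div_nonneg (by linarith) hdpos.le) n
    apply Real.sSup_le
    · rintro x ⟨t, ht, rfl⟩
      calc ‖G (-((l+1:ℕ):ℂ)+t)‖
          ≤ (((l:ℝ)+A)/((l:ℝ)+(2-A)))^n * ‖G (-(l:ℂ)+t)‖ := hkey l hl t ht
        _ ≤ _ := mul_le_mul_of_nonneg_left (hdub l t ht) hKnn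
    · exact mul_nonneg hKnn (hd0 l)
  set K : ℕ → ℝ := fun l => (((l:ℝ)+A)/((l:ℝ)+(2-A)))^n with hKdef
  have hKlim : Filter.Tendsto K Filter.atTop (nhds 1) := by
    have h1 : Filter.Tendsto (fun l : ℕ => ((l:ℝ)+A)/((l:ℝ)+(2-A)))
        Filter.atTop (nhds 1) := by
      have h2 : ∀ᶠ l : ℕ in Filter.atTop,
          1 + (A - (2-A)) * ((l:ℝ)+(2-A))⁻¹ = ((l:ℝ)+A)/((l:ℝ)+(2-A)) := by
        filter_upwards [Filter.eventually_ge_atTop (Nat.ceil (A+1))] with l hl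
        have hl' : A + 1 ≤ (l:ℝ) :=
          le_trans (Nat.le_ceil _) (by exact_mod_cast hl)
        have hne : ((l:ℝ)+(2-A)) ≠ 0 := ne_of_gt (by linarith)
        field_simp
        ring
      rw [← Filter.tendsto_congr' h2]
      have h3 : Filter.Tendsto (fun l : ℕ => ((l:ℝ)+(2-A))⁻¹) Filter.atTop (nhds 0) := by
        apply Filter.Tendsto.inv_tendsto_atTop
        exact Filter.tendsto_atTop_add_const_right _ (2-A) tendsto_natCast_atTop_atTop
      have h4 := (h3.const_mul (A - (2-A))).const_add 1
      simpa using h4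
    have h5 := h1.pow n
    simpa using h5
  set r0 : ℝ := Real.exp (-w.re) with hr0def
  have hr0pos : 0 < r0 := Real.exp_pos _
  have hr01 : r0 < 1 := by
    rw [hr0def]
    exact Real.exp_lt_one_iff.mpr (by linarith)
  set ρ : ℝ := (1 + r0)/2 with hρdef
  have hρ1 : ρ < 1 := by rw [hρdef]; linarith
  have hr0ρ : r0 < ρ := by rw [hρdef]; linarith
  have hev : ∀ᶠ l : ℕ in Filter.atTop, K l * r0 ≤ ρ := by
    have h1 : Filter.Tendsto (fun l => K l * r0) Filter.atTop (nhds (1 * r0)) :=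
      hKlim.mul_const r0
    rw [one_mul] at h1
    exact (h1.eventually_lt_const hr0ρ).mono fun l h => h.le
  set v : ℕ → ℝ := fun l => d l * r0 ^ l with hvdef
  have hvnn : ∀ k, 0 ≤ v k := fun k => mul_nonneg (hd0 k) (pow_nonneg hr0pos.le k)
  have hvrat : ∀ᶠ l : ℕ in Filter.atTop, ‖v (l+1)‖ ≤ ρ * ‖v l‖ := by
    filter_upwards [hev, Filter.eventually_ge_atTop (Nat.ceil (A+1))] with l h1 h2
    have hl : A + 1 ≤ (l:ℝ) := le_trans (Nat.le_ceil _) (by exact_mod_cast h2)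
    rw [Real.norm_of_nonneg (hvnn _), Real.norm_of_nonneg (hvnn _)]
    calc v (l+1) = d (l+1) * (r0 ^ l * r0) := by rw [hvdef]; simp [pow_succ]
      _ ≤ (K l * d l) * (r0^l * r0) :=
          mul_le_mul_of_nonneg_right (hdrec l hl) (by positivity)
      _ = (K l * r0) * (d l * r0^l) := by ring
      _ ≤ ρ * (d l * r0^l) :=
          mul_le_mul_of_nonneg_right h1 (mul_nonneg (hd0 l) (by positivity))
      _ = ρ * v l := rfl
  have hvsum : Summable v := summable_of_ratio_norm_eventually_le hρ1 hvrat
  set Cw : ℝ := Real.exp ((|ν| + 1) * ‖w‖) with hCwdef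
  have hCwpos : 0 < Cw := Real.exp_pos _
  apply Summable.of_norm_bounded (g := fun l => ((p.factorial : ℝ) * Cw) * v l)
    (hvsum.mul_left _)
  intro l
  have hFdiff : Differentiable ℂ
      (fun t : ℂ => G (-(l:ℂ) + t) * Complex.exp ((-(l:ℂ)+t)*w)) := by
    apply Differentiable.mul
    · exact hGdiff.comp ((differentiable_const _).add differentiable_id)
    · exact Complex.differentiable_exp.comp
        ((((differentiable_const _).add differentiable_id)).mul (differentiable_const _))
  have hMb : ∀ t ∈ Metric.sphere ((ν:ℂ)) (1:ℝ),
      ‖G (-(l:ℂ)+t) * Complex.exp ((-(l:ℂ)+t)*w)‖ ≤ d l * (Cw * r0 ^ l) := by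
    intro t ht
    rw [norm_mul]
    have h1 : ‖Complex.exp ((-(l:ℂ)+t)*w)‖ ≤ Cw * r0 ^ l := by
      rw [Complex.norm_exp]
      have he : (-(l:ℂ)+t)*w = ((-(l:ℝ) : ℝ):ℂ)*w + t*w := by push_cast; ring
      have hre : ((-(l:ℂ)+t)*w).re = -(l:ℝ)*w.re + (t*w).re := by
        rw [he, Complex.add_re]
        have h9 : ((((-(l:ℝ)):ℝ):ℂ) * w).re = -(l:ℝ) * w.re := by
          simp [Complex.mul_re]
        rw [h9]
      rw [hre]
      have h2 : Real.exp (-(l:ℝ)*w.re + (t*w).re)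
          = Real.exp ((t*w).re) * Real.exp ((l:ℝ) * (-w.re)) := by
        rw [← Real.exp_add]; ring_nf
      rw [h2]
      have h3 : Real.exp ((l:ℝ) * (-w.re)) = r0 ^ l := by
        rw [hr0def, ← Real.exp_nat_mul]
      rw [h3]
      apply mul_le_mul_of_nonneg_right _ (by positivity)
      rw [hCwdef]
      apply Real.exp_le_exp.mpr
      calc (t*w).re ≤ ‖t*w‖ := Complex.re_le_norm _
        _ = ‖t‖ * ‖w‖ := norm_mul _ _
        _ ≤ (|ν| + 1) * ‖w‖ :=
            mul_le_mul_of_nonneg_right (htb t ht) (norm_nonneg w)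
    exact mul_le_mul (hdub l t ht) h1 (norm_nonneg _) (hd0 l)
  have hcb := cauchy_bound hFdiff ((ν:ℂ)) p (d l * (Cw * r0 ^ l)) hMb
  calc ‖iteratedDeriv p (fun t : ℂ => G (-(l:ℂ) + t) * Complex.exp ((-(l:ℂ)+t)*w)) (ν:ℂ)‖
      ≤ (p.factorial:ℝ) * (d l * (Cw * r0^l)) := hcb
    _ = ((p.factorial:ℝ) * Cw) * v l := by rw [hvdef]; ring

lemma part_one {n : ℕ} (α β : Fin n → ℝ) (ν : ℝ) (Bv : ℂ)
    (hB : Complex.exp (2 * (π:ℂ) * Complex.I * (ν:ℂ)) = Bv)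
    (r : ℕ) (w : ℂ) (hw : 0 < w.re) :
    gB α β ν r (w + 2 * (π:ℂ) * Complex.I) =
      Bv * ∑ p ∈ Finset.range (r + 1), (r.choose p : ℂ) * gB α β ν p w := by
  have hπ : (π:ℝ) ≠ 0 := Real.pi_ne_zero
  have hc0 : (2 * (π:ℂ) * Complex.I) ≠ 0 := by
    simp [Complex.ext_iff, Real.pi_ne_zero]
  set c : ℂ := 2 * (π:ℂ) * Complex.I with hcdef
  set G : ℂ → ℂ := gammaProd (fun i => (α i:ℂ)) (fun i => (β i:ℂ)) with hGdef
  have hGdiff : Differentiable ℂ G := gammaProd_differentiable _ _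
  set F : ℕ → ℂ → ℂ := fun l t => G (-(l:ℂ) + t) * Complex.exp ((-(l:ℂ) + t) * w) with hFdef
  have hFdiff : ∀ l : ℕ, Differentiable ℂ (F l) := by
    intro l
    apply Differentiable.mul
    · exact hGdiff.comp ((differentiable_const _).add differentiable_id)
    · exact Complex.differentiable_exp.comp
        ((((differentiable_const _).add differentiable_id)).mul (differentiable_const _))
  have hEdiff : Differentiable ℂ (fun t : ℂ => Complex.exp (c * t)) :=
    Complex.differentiable_exp.comp ((differentiable_const _).mul differentiable_id)
  have hsum : ∀ p : ℕ, Summable (fun l : ℕ => iteratedDeriv p (F l) ((ν:ℝ):ℂ)) :=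
    fun p => summable_term α β ν p w hw
  have hterm : ∀ l : ℕ,
      ((c ^ r)⁻¹ : ℂ) * iteratedDeriv r
        (fun t : ℂ => G (-(l:ℂ)+t) * Complex.exp ((-(l:ℂ)+t) * (w+c))) ((ν:ℝ):ℂ)
      = ∑ p ∈ Finset.range (r+1),
          (Bv * (r.choose p : ℂ)) * ((c^p)⁻¹ * iteratedDeriv p (F l) ((ν:ℝ):ℂ)) := by
    intro l
    have hre : (fun t : ℂ => G (-(l:ℂ)+t) * Complex.exp ((-(l:ℂ)+t) * (w+c)))
        = fun t => F l t * Complex.exp (c * t) := by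
      funext t
      have h1 : (-(l:ℂ)+t) * (w + c) = ((-(l:ℂ)+t) * w + c * t) + (((-(l:ℤ) : ℤ)):ℂ) * (2 * (π:ℂ) * Complex.I) := by
        rw [hcdef]; push_cast; ring
      rw [h1, Complex.exp_add, Complex.exp_add, Complex.exp_int_mul_two_pi_mul_I, mul_one,
        hFdef]
      ring
    rw [hre, iteratedDeriv_mul_entire (hFdiff l) hEdiff r ((ν:ℝ):ℂ)]
    have hEk : ∀ k : ℕ, iteratedDeriv k (fun t : ℂ => Complex.exp (c * t)) ((ν:ℝ):ℂ)
        = c ^ k * Bv := by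
      intro k
      rw [show (fun t : ℂ => Complex.exp (c * t)) = fun s : ℂ => Complex.exp (c * s) from rfl]
      rw [iteratedDeriv_cexp_const_mul k c]
      show c ^ k * Complex.exp (c * ((ν:ℝ):ℂ)) = c ^ k * Bv
      rw [hB]
    rw [Finset.mul_sum]
    apply Finset.sum_congr rfl
    intro p hp
    have hple : p ≤ r := Nat.lt_succ_iff.mp (Finset.mem_range.mp hp)
    rw [hEk (r - p)]
    have hcc : (c^r)⁻¹ * c^(r-p) = (c^p)⁻¹ := by
      rw [← pow_sub_mul_pow c hple, mul_inv, mul_comm ((c^(r-p))⁻¹), mul_assoc,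
        inv_mul_cancel₀ (pow_ne_zero _ hc0), mul_one]
    calc (c ^ r)⁻¹ * ((r.choose p : ℂ) * iteratedDeriv p (F l) ((ν:ℝ):ℂ) * (c ^ (r-p) * Bv))
        = ((c^r)⁻¹ * c^(r-p)) * ((r.choose p : ℂ) * iteratedDeriv p (F l) ((ν:ℝ):ℂ) * Bv) := by
          ring
      _ = (Bv * (r.choose p : ℂ)) * ((c^p)⁻¹ * iteratedDeriv p (F l) ((ν:ℝ):ℂ)) := by
          rw [hcc]; ring
  have hgB : gB α β ν r (w + c) = ∑' l : ℕ, ((c ^ r)⁻¹ : ℂ) * iteratedDeriv r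
      (fun t : ℂ => G (-(l:ℂ)+t) * Complex.exp ((-(l:ℂ)+t) * (w+c))) ((ν:ℝ):ℂ) := rfl
  rw [hgB, tsum_congr hterm]
  rw [Summable.tsum_finsetSum (fun p _ => ((hsum p).mul_left ((c^p)⁻¹ : ℂ)).mul_left (Bv * (r.choose p : ℂ)))]
  rw [Finset.mul_sum]
  apply Finset.sum_congr rfl
  intro p _
  rw [tsum_mul_left, tsum_mul_left]
  have hgBp : gB α β ν p w = ∑' l : ℕ, ((c ^ p)⁻¹ : ℂ) * iteratedDeriv p (F l) ((ν:ℝ):ℂ) := rfl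
  rw [hgBp, tsum_mul_left]
  ring

lemma neg_one_pow_sub (n u : ℕ) (h : u ≤ n) :
    ((-1:ℂ))^(n-u) = ((-1:ℂ))^n * ((-1:ℂ))^u := by
  have h9 : ((-1:ℂ))^u * ((-1:ℂ))^u = 1 := by
    rw [← pow_add, Even.neg_one_pow ⟨u, rfl⟩]
  calc ((-1:ℂ))^(n-u) = ((-1:ℂ))^(n-u) * (((-1:ℂ))^u * ((-1:ℂ))^u) := by rw [h9, mul_one]
    _ = (((-1:ℂ))^(n-u) * ((-1:ℂ))^u) * ((-1:ℂ))^u := by ring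
    _ = ((-1:ℂ))^n * ((-1:ℂ))^u := by rw [pow_sub_mul_pow (-1:ℂ) h]

lemma alt_choose_sum (N : ℕ) :
    ∑ u ∈ Finset.range (N+1), ((-1:ℂ))^u * (N.choose u : ℂ) = if N = 0 then 1 else 0 := by
  have h := Int.alternating_sum_range_choose (n := N)
  have h2 := congrArg (Int.cast : ℤ → ℂ) h
  push_cast at h2
  rw [h2]

lemma choose_alternating (a b : ℕ) :
    ∑ k ∈ Finset.range (a+1),
      (if b ≤ k then ((-1:ℂ))^(a-k) * (a.choose k : ℂ) * (k.choose b : ℂ) else 0)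
      = if a = b then 1 else 0 := by
  rcases lt_or_ge a b with hab | hab
  · rw [if_neg (by omega)]
    refine Finset.sum_eq_zero fun k hk => if_neg (by rw [Finset.mem_range] at hk; omega)
  · rw [Finset.range_eq_Ico, ← Finset.sum_Ico_consecutive _ (Nat.zero_le b) (by omega : b ≤ a+1)]
    have h2 : ∑ k ∈ Finset.Ico 0 b,
        (if b ≤ k then ((-1:ℂ))^(a-k) * (a.choose k : ℂ) * (k.choose b : ℂ) else 0) = 0 :=
      Finset.sum_eq_zero fun k hk => if_neg (by rw [Finset.mem_Ico] at hk; omega)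
    rw [h2, zero_add, Finset.sum_Ico_eq_sum_range]
    have h3 : ∀ u ∈ Finset.range (a + 1 - b),
        (if b ≤ b + u then ((-1:ℂ))^(a-(b+u)) * (a.choose (b+u) : ℂ) * ((b+u).choose b : ℂ) else 0)
          = ((a.choose b : ℂ) * ((-1:ℂ))^(a-b)) * (((-1:ℂ))^u * (((a-b).choose u : ℂ))) := by
      intro u hu
      rw [Finset.mem_range] at hu
      have hub : b + u ≤ a := by omega
      rw [if_pos (Nat.le_add_right b u)]
      have hch : (a.choose (b+u) : ℂ) * ((b+u).choose b : ℂ)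
          = (a.choose b : ℂ) * ((a-b).choose u : ℂ) := by
        have h4 := Nat.choose_mul (n := a) (Nat.le_add_right b u)
        have h5 : (b + u) - b = u := by omega
        rw [h5] at h4
        exact_mod_cast congrArg (Nat.cast (R := ℂ)) h4
      have hsgn : ((-1:ℂ))^(a-(b+u)) = ((-1:ℂ))^(a-b) * ((-1:ℂ))^u := by
        rw [show a - (b+u) = (a-b) - u by omega, neg_one_pow_sub (a-b) u (by omega)]
      calc ((-1:ℂ))^(a-(b+u)) * (a.choose (b+u) : ℂ) * ((b+u).choose b : ℂ)
          = ((-1:ℂ))^(a-(b+u)) * ((a.choose (b+u) : ℂ) * ((b+u).choose b : ℂ)) := by ring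
        _ = (((-1:ℂ))^(a-b) * ((-1:ℂ))^u) * ((a.choose b : ℂ) * ((a-b).choose u : ℂ)) := by
            rw [hch, hsgn]
        _ = _ := by ring
    rw [Finset.sum_congr rfl h3, ← Finset.mul_sum]
    rw [show a + 1 - b = (a - b) + 1 by omega, alt_choose_sum (a-b)]
    rcases eq_or_ne a b with rfl | hne
    · simp
    · rw [if_neg (by omega), if_neg hne, mul_zero]

lemma fin_if_sum {M : ℕ} (r : ℕ) (hr : r < M) (f : ℕ → ℂ) :
    ∑ k : Fin M, (if (k:ℕ) ≤ r then f (k:ℕ) else 0) = ∑ p ∈ Finset.range (r+1), f p := by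
  rw [Fin.sum_univ_eq_sum_range (fun j => if j ≤ r then f j else 0) M]
  rw [← Finset.sum_subset (Finset.range_subset_range.2 (by omega) : Finset.range (r+1) ⊆ Finset.range M)
    (fun x _ hnx => if_neg (fun hx => hnx (Finset.mem_range.2 (by omega))))]
  exact Finset.sum_congr rfl fun i hi => if_pos (by rw [Finset.mem_range] at hi; omega)

def Emat (nB : ℕ) (m : Fin nB → ℕ) (B : Fin nB → ℂ) :
    Matrix (Σ j : Fin nB, Fin (m j)) (Σ j : Fin nB, Fin (m j)) ℂ :=
  fun p q => if p.1 = q.1 ∧ (q.2 : ℕ) ≤ (p.2 : ℕ)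
    then ((-1:ℂ))^((p.2:ℕ)-(q.2:ℕ)) * ((p.2:ℕ).choose (q.2:ℕ) : ℂ) * (B p.1)⁻¹ else 0

lemma Emat_mul (nB : ℕ) (m : Fin nB → ℕ) (B : Fin nB → ℂ) (hB0 : ∀ j, B j ≠ 0)
    (D : Matrix (Σ j : Fin nB, Fin (m j)) (Σ j : Fin nB, Fin (m j)) ℂ)
    (hD : ∀ p q : Σ j : Fin nB, Fin (m j),
      D p q = if p.1 = q.1 ∧ (q.2 : ℕ) ≤ (p.2 : ℕ)
        then (Nat.choose (p.2 : ℕ) (q.2 : ℕ) : ℂ) * B p.1 else 0) :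
    Emat nB m B * D = 1 := by
  ext p q
  rw [Matrix.mul_apply]
  rw [← Finset.univ_sigma_univ, Finset.sum_sigma]
  rw [Finset.sum_eq_single p.1 (fun j _ hj => Finset.sum_eq_zero fun k _ => by
      rw [show Emat nB m B p ⟨j, k⟩ = 0 from if_neg (fun hc => hj hc.1.symm), zero_mul])
    (fun h => absurd (Finset.mem_univ p.1) h)]
  obtain ⟨jp, a⟩ := p
  obtain ⟨jq, b⟩ := q
  rcases eq_or_ne jp jq with rfl | hne
  · have hterm : ∀ k : Fin (m jp),
        Emat nB m B ⟨jp, a⟩ ⟨jp, k⟩ * D ⟨jp, k⟩ ⟨jp, b⟩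
          = if (k:ℕ) ≤ (a:ℕ) then
              (if (b:ℕ) ≤ (k:ℕ) then
                ((-1:ℂ))^((a:ℕ)-(k:ℕ)) * ((a:ℕ).choose (k:ℕ) : ℂ) * ((k:ℕ).choose (b:ℕ) : ℂ)
                else 0)
            else 0 := by
      intro k
      rw [hD]
      show (if (⟨jp,a⟩ : Σ j, Fin (m j)).1 = (⟨jp,k⟩ : Σ j, Fin (m j)).1 ∧ (k:ℕ) ≤ (a:ℕ) then _ else 0) * _ = _
      simp only [eq_self_iff_true, true_and]
      split_ifs with h1 h2
      · rw [mul_comm (((-1:ℂ))^((a:ℕ)-(k:ℕ)) * ((a:ℕ).choose (k:ℕ) : ℂ) * (B jp)⁻¹)]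
        field_simp [hB0 jp]
      · rw [mul_zero]
      · rw [zero_mul]
      · rw [zero_mul]
    rw [Finset.sum_congr rfl (fun k _ => hterm k)]
    have := fin_if_sum (M := m jp) (a:ℕ) a.isLt
      (fun k => if (b:ℕ) ≤ k then ((-1:ℂ))^((a:ℕ)-k) * ((a:ℕ).choose k : ℂ) * (k.choose (b:ℕ) : ℂ) else 0)
    rw [this, choose_alternating (a:ℕ) (b:ℕ)]
    rw [Matrix.one_apply]
    by_cases hab : (a:ℕ) = (b:ℕ)
    · rw [if_pos hab, if_pos (by congr 1; exact Fin.ext hab)]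
    · rw [if_neg hab, if_neg (fun hc => hab (by
        have := congrArg (fun x : Σ j : Fin nB, Fin (m j) => (x.2 : ℕ)) hc
        simpa using this))]
  · rw [Matrix.one_apply_ne (fun hc => hne (congrArg Sigma.fst hc))]
    exact Finset.sum_eq_zero fun k _ => by
      rw [hD]
      rw [if_neg (fun hc => hne hc.1), mul_zero]

/-- For real tuples `α, β`, the local solutions `g_{Bⱼ,r}` at `∞` transform
under `w ↦ w + 2πi` by `g_{Bⱼ,r}(w + 2πi) = Bⱼ · Σ_{p=0}^r C(r,p) g_{Bⱼ,p}(w)`; consequently,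
in the basis `S_{Bⱼ,r}` the local monodromy around `∞` — the loop around `∞` being the inverse
`w ↦ w - 2πi` of the loop around `0` — is the inverse transposed block-diagonal matrix
`(D_{B,m_B}^t)⁻¹`, i.e. `g_p(w - 2πi) = Σ_q (D⁻¹)_{p,q} g_q(w)`. -/
theorem monodromy_at_infinity (n nB : ℕ) (α β : Fin n → ℝ)
    (B : Fin nB → ℂ) (hinj : Function.Injective B)
    (hval : ∀ j, ∃ i, Complex.exp (2 * (π : ℂ) * Complex.I * (β i : ℂ)) = B j)
    (hsurj : ∀ i, ∃ j, Complex.exp (2 * (π : ℂ) * Complex.I * (β i : ℂ)) = B j)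
    (m : Fin nB → ℕ)
    (hm : ∀ j, m j =
      Nat.card {i : Fin n // Complex.exp (2 * (π : ℂ) * Complex.I * (β i : ℂ)) = B j})
    (hn : ∑ j, m j = n)
    (ν' : Fin nB → ℝ)
    (hν₁ : ∀ j, ∃ i, β i = ν' j ∧ Complex.exp (2 * (π : ℂ) * Complex.I * (β i : ℂ)) = B j)
    (hν₂ : ∀ j i, Complex.exp (2 * (π : ℂ) * Complex.I * (β i : ℂ)) = B j → β i ≤ ν' j)
    (D : Matrix (Σ j : Fin nB, Fin (m j)) (Σ j : Fin nB, Fin (m j)) ℂ)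
    (hD : ∀ p q : Σ j : Fin nB, Fin (m j),
      D p q = if p.1 = q.1 ∧ (q.2 : ℕ) ≤ (p.2 : ℕ)
        then (Nat.choose (p.2 : ℕ) (q.2 : ℕ) : ℂ) * B p.1 else 0) :
    (∀ j : Fin nB, ∀ r : ℕ, r < m j → ∀ w : ℂ, 0 < w.re →
      gB α β (ν' j) r (w + 2 * (π : ℂ) * Complex.I) =
        B j * ∑ p ∈ Finset.range (r + 1), (Nat.choose r p : ℂ) * gB α β (ν' j) p w) ∧
    (∀ p : Σ j : Fin nB, Fin (m j), ∀ w : ℂ, 0 < w.re →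
      gB α β (ν' p.1) (p.2 : ℕ) (w - 2 * (π : ℂ) * Complex.I) =
        ∑ q : Σ j : Fin nB, Fin (m j), D⁻¹ p q * gB α β (ν' q.1) (q.2 : ℕ) w) := by
  have hBexp : ∀ j, Complex.exp (2 * (π:ℂ) * Complex.I * ((ν' j : ℝ):ℂ)) = B j := by
    intro j
    obtain ⟨i, hβ, hBij⟩ := hν₁ j
    rw [show ((ν' j : ℝ):ℂ) = ((β i : ℝ):ℂ) from by rw [hβ]]
    exact hBij
  have hp1 : ∀ (j : Fin nB) (r : ℕ) (w : ℂ), 0 < w.re →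
      gB α β (ν' j) r (w + 2 * (π:ℂ) * Complex.I) =
        B j * ∑ p ∈ Finset.range (r + 1), (r.choose p : ℂ) * gB α β (ν' j) p w :=
    fun j r w hw => part_one α β (ν' j) (B j) (hBexp j) r w hw
  refine ⟨fun j r _ w hw => hp1 j r w hw, ?_⟩
  intro p w hw
  have hB0 : ∀ j, B j ≠ 0 := fun j => by rw [← hBexp j]; exact Complex.exp_ne_zero _
  have hED : Emat nB m B * D = 1 := Emat_mul nB m B hB0 D hD
  have hDinv : D⁻¹ = Emat nB m B := Matrix.inv_eq_left_inv hED
  rw [hDinv]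
  set w₀ : ℂ := w - 2 * (π:ℂ) * Complex.I with hw₀def
  have hw₀re : 0 < w₀.re := by
    rw [hw₀def]
    simpa using hw
  have hw₀w : w₀ + 2 * (π:ℂ) * Complex.I = w := by rw [hw₀def]; ring
  have hstep : ∀ q : Σ j : Fin nB, Fin (m j),
      (∑ s : Σ j : Fin nB, Fin (m j), D q s * gB α β (ν' s.1) (s.2:ℕ) w₀)
        = gB α β (ν' q.1) (q.2:ℕ) w := by
    intro q
    rw [← Finset.univ_sigma_univ, Finset.sum_sigma]
    rw [Finset.sum_eq_single q.1 (fun j _ hj => Finset.sum_eq_zero fun k _ => by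
        rw [hD, if_neg (fun hc => hj hc.1.symm), zero_mul])
      (fun h => absurd (Finset.mem_univ q.1) h)]
    have hterm : ∀ k : Fin (m q.1),
        D q ⟨q.1, k⟩ * gB α β (ν' (⟨q.1, k⟩ : Σ j : Fin nB, Fin (m j)).1) ((k:ℕ)) w₀
          = if (k:ℕ) ≤ (q.2:ℕ) then
              ((q.2:ℕ).choose (k:ℕ) : ℂ) * B q.1 * gB α β (ν' q.1) (k:ℕ) w₀ else 0 := by
      intro k
      rw [hD]
      simp only [eq_self_iff_true, true_and]
      split_ifs with h1
      · rfl
      · rw [zero_mul]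
    rw [Finset.sum_congr rfl (fun k _ => hterm k)]
    rw [fin_if_sum (M := m q.1) (q.2:ℕ) q.2.isLt
      (fun k => ((q.2:ℕ).choose k : ℂ) * B q.1 * gB α β (ν' q.1) k w₀)]
    rw [← hw₀w, hp1 q.1 (q.2:ℕ) w₀ hw₀re, Finset.mul_sum]
    exact Finset.sum_congr rfl fun k _ => by ring
  calc gB α β (ν' p.1) (p.2:ℕ) w₀
      = ∑ s : Σ j : Fin nB, Fin (m j),
          (1 : Matrix (Σ j : Fin nB, Fin (m j)) (Σ j : Fin nB, Fin (m j)) ℂ) p s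
            * gB α β (ν' s.1) (s.2:ℕ) w₀ := by
        rw [Finset.sum_eq_single p (fun s _ hs => by
            rw [Matrix.one_apply_ne (fun hc => hs hc.symm), zero_mul])
          (fun h => absurd (Finset.mem_univ p) h)]
        rw [Matrix.one_apply_eq, one_mul]
    _ = ∑ s : Σ j : Fin nB, Fin (m j),
          (∑ q : Σ j : Fin nB, Fin (m j), Emat nB m B p q * D q s)
            * gB α β (ν' s.1) (s.2:ℕ) w₀ := by
        refine Finset.sum_congr rfl fun s _ => ?_
        rw [show (∑ q : Σ j : Fin nB, Fin (m j), Emat nB m B p q * D q s)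
            = (Emat nB m B * D) p s from (Matrix.mul_apply).symm, hED]
    _ = ∑ s : Σ j : Fin nB, Fin (m j), ∑ q : Σ j : Fin nB, Fin (m j),
          Emat nB m B p q * (D q s * gB α β (ν' s.1) (s.2:ℕ) w₀) := by
        refine Finset.sum_congr rfl fun s _ => ?_
        rw [Finset.sum_mul]
        exact Finset.sum_congr rfl fun q _ => by ring
    _ = ∑ q : Σ j : Fin nB, Fin (m j), ∑ s : Σ j : Fin nB, Fin (m j),
          Emat nB m B p q * (D q s * gB α β (ν' s.1) (s.2:ℕ) w₀) := Finset.sum_comm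
    _ = ∑ q : Σ j : Fin nB, Fin (m j), Emat nB m B p q * gB α β (ν' q.1) (q.2:ℕ) w := by
        refine Finset.sum_congr rfl fun q _ => ?_
        rw [← Finset.mul_sum, hstep q]
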